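/- A point α̃ in the nonnegative orthant is a global maximizer of the penalized objective S(α) = l(α) − γ‖α‖₂² (with γ > 0) over the nonnegative orthant if and only if it satisfies the Karush–Kuhn–Tucker conditions: α̃_j · ( (∇l)_j(α̃) − 2γ·α̃_j ) = 0 for every j = 1,…,M, and (∇l)_j(α̃) − 2γ·α̃_j ≤ 0 for every j with α̃_j = 0, where (∇l)_j(α) = Σ_{i=1}^N L_{ij}( d_i·exp(−(Lα)_i) − P_i ). -/

import Mathlib

/-- The Poisson log-likelihood for the Raman lidar inverse problem. -/
noncomputable def lidarLogLik {N M : ℕ} (L : Matrix (Fin N) (Fin M) ℝ)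
    (d : Fin N → ℝ) (P : Fin N → ℕ) (α : Fin M → ℝ) : ℝ :=
  ∑ i, ((P i : ℝ) * Real.log (d i) - (L.mulVec α i) * (P i : ℝ)
    - d i * Real.exp (-(L.mulVec α i)) - Real.log (Nat.factorial (P i)))

/-- The penalized objective `S(α) = l(α) − γ‖α‖₂²`. -/
noncomputable def lidarPenalized {N M : ℕ} (L : Matrix (Fin N) (Fin M) ℝ)
    (d : Fin N → ℝ) (P : Fin N → ℕ) (γ : ℝ) (α : Fin M → ℝ) : ℝ :=
  lidarLogLik L d P α - γ * ∑ j, (α j) ^ 2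

/-- The `j`-th component of the gradient of the Poisson log-likelihood. -/
noncomputable def lidarGrad {N M : ℕ} (L : Matrix (Fin N) (Fin M) ℝ)
    (d : Fin N → ℝ) (P : Fin N → ℕ) (α : Fin M → ℝ) (j : Fin M) : ℝ :=
  ∑ i, L i j * (d i * Real.exp (-(L.mulVec α i)) - (P i : ℝ))

lemma lidar_pt_ineq (dd PP s t : ℝ) (hdd : 0 < dd) :
    -(t) * PP - dd * Real.exp (-t) - (-(s) * PP - dd * Real.exp (-s))
      ≤ (t - s) * (dd * Real.exp (-s) - PP) := by
  have h1 : (s - t) + 1 ≤ Real.exp (s - t) := Real.add_one_le_exp _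
  have h2 : Real.exp (-t) = Real.exp (-s) * Real.exp (s - t) := by
    rw [← Real.exp_add]; ring_nf
  nlinarith [Real.exp_pos (-s), mul_le_mul_of_nonneg_left h1 (le_of_lt hdd),
    mul_pos hdd (Real.exp_pos (-s))]

lemma lidar_linearize {N M : ℕ}
    (L : Matrix (Fin N) (Fin M) ℝ) (d : Fin N → ℝ) (hd : ∀ i, 0 < d i)
    (P : Fin N → ℕ) (γ : ℝ) (hγ : 0 < γ)
    (a α : Fin M → ℝ) :
    lidarPenalized L d P γ α - lidarPenalized L d P γ a
      ≤ ∑ j, (lidarGrad L d P a j - 2 * γ * a j) * (α j - a j) := by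
  have hA : lidarLogLik L d P α - lidarLogLik L d P a
      = (∑ i, (-(L.mulVec α i) * P i - d i * Real.exp (-(L.mulVec α i))
          - (-(L.mulVec a i) * P i - d i * Real.exp (-(L.mulVec a i))))) := by
    simp only [lidarLogLik, ← Finset.sum_sub_distrib]
    apply Finset.sum_congr rfl; intro i _; ring
  have hq : (∑ j, (α j)^2) - (∑ j, (a j)^2) = ∑ j, ((α j)^2 - (a j)^2) :=
    by rw [Finset.sum_sub_distrib]
  have hdiff : lidarPenalized L d P γ α - lidarPenalized L d P γ a
      = (∑ i, (-(L.mulVec α i) * P i - d i * Real.exp (-(L.mulVec α i))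
          - (-(L.mulVec a i) * P i - d i * Real.exp (-(L.mulVec a i)))))
        - γ * ∑ j, ((α j)^2 - (a j)^2) := by
    simp only [lidarPenalized]
    linear_combination hA - γ * hq
  rw [hdiff]
  have h1 : (∑ i, (-(L.mulVec α i) * P i - d i * Real.exp (-(L.mulVec α i))
          - (-(L.mulVec a i) * P i - d i * Real.exp (-(L.mulVec a i)))))
      ≤ ∑ i, (L.mulVec α i - L.mulVec a i) * (d i * Real.exp (-(L.mulVec a i)) - P i) :=
    Finset.sum_le_sum fun i _ => lidar_pt_ineq (d i) (P i) (L.mulVec a i) (L.mulVec α i) (hd i)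
  have h2 : ∑ i, (L.mulVec α i - L.mulVec a i) * (d i * Real.exp (-(L.mulVec a i)) - P i)
      = ∑ j, lidarGrad L d P a j * (α j - a j) := by
    have hmv : ∀ i, L.mulVec α i - L.mulVec a i = ∑ j, L i j * (α j - a j) := by
      intro i
      simp only [Matrix.mulVec, dotProduct, mul_sub, Finset.sum_sub_distrib]
    simp only [hmv, lidarGrad, Finset.sum_mul]
    rw [Finset.sum_comm]
    apply Finset.sum_congr rfl; intro j _
    apply Finset.sum_congr rfl; intro i _; ring
  have h3 : ∑ j, ((a j) * (2 * (α j - a j))) ≤ ∑ j, ((α j)^2 - (a j)^2) :=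
    Finset.sum_le_sum fun j _ => by nlinarith [sq_nonneg (α j - a j)]
  have h4 : -(γ * ∑ j, ((α j)^2 - (a j)^2)) ≤ -(γ * ∑ j, ((a j) * (2 * (α j - a j)))) := by
    have := mul_le_mul_of_nonneg_left h3 (le_of_lt hγ)
    linarith
  calc _ ≤ (∑ j, lidarGrad L d P a j * (α j - a j))
            - γ * ∑ j, ((a j) * (2 * (α j - a j))) := by
        rw [← h2]; linarith
    _ = ∑ j, (lidarGrad L d P a j - 2 * γ * a j) * (α j - a j) := by
        rw [Finset.mul_sum, ← Finset.sum_sub_distrib]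
        apply Finset.sum_congr rfl; intro j _; ring

lemma lidar_mulVec_update {N M : ℕ} (L : Matrix (Fin N) (Fin M) ℝ) (a : Fin M → ℝ)
    (j : Fin M) (t : ℝ) (i : Fin N) :
    L.mulVec (Function.update a j t) i = L.mulVec a i + L i j * (t - a j) := by
  simp only [Matrix.mulVec, dotProduct]
  have h : ∑ x, L i x * Function.update a j t x - ∑ x, L i x * a x = L i j * (t - a j) := by
    rw [← Finset.sum_sub_distrib, Finset.sum_eq_single j]
    · simp [Function.update_self]; ring
    · intro k _ hk; simp [Function.update_of_ne hk]
    · simp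
  linarith

lemma lidar_sq_sum_update {M : ℕ} (a : Fin M → ℝ) (j : Fin M) (t : ℝ) :
    ∑ k, (Function.update a j t k)^2 = t^2 + ∑ k ∈ Finset.univ \ {j}, (a k)^2 := by
  have h : ∀ k, (Function.update a j t k)^2 = Function.update (fun k => (a k)^2) j (t^2) k := by
    intro k
    rcases eq_or_ne k j with rfl | hk
    · simp
    · simp [Function.update_of_ne hk]
  simp only [h]
  rw [Finset.sum_update_of_mem (Finset.mem_univ j)]

lemma lidar_hasDerivAt {N M : ℕ} (L : Matrix (Fin N) (Fin M) ℝ) (d : Fin N → ℝ)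
    (P : Fin N → ℕ) (γ : ℝ) (a : Fin M → ℝ) (j : Fin M) :
    HasDerivAt (fun t => lidarPenalized L d P γ (Function.update a j t))
      (lidarGrad L d P a j - 2 * γ * a j) (a j) := by
  have heq : (fun t => lidarPenalized L d P γ (Function.update a j t))
      = fun t => (∑ i, ((P i : ℝ) * Real.log (d i)
          - (L.mulVec a i + L i j * (t - a j)) * (P i : ℝ)
          - d i * Real.exp (-(L.mulVec a i + L i j * (t - a j)))
          - Real.log (Nat.factorial (P i))))
        - γ * (t^2 + ∑ k ∈ Finset.univ \ {j}, (a k)^2) := by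
    funext t
    simp only [lidarPenalized, lidarLogLik, lidar_mulVec_update, lidar_sq_sum_update]
  rw [heq]
  have h1 : ∀ i : Fin N, HasDerivAt (fun t : ℝ => (P i : ℝ) * Real.log (d i)
      - (L.mulVec a i + L i j * (t - a j)) * (P i : ℝ)
      - d i * Real.exp (-(L.mulVec a i + L i j * (t - a j)))
      - Real.log (Nat.factorial (P i)))
      (L i j * (d i * Real.exp (-(L.mulVec a i)) - (P i : ℝ))) (a j) := by
    intro i
    have hu : HasDerivAt (fun t : ℝ => L.mulVec a i + L i j * (t - a j)) (L i j) (a j) := by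
      have := (((hasDerivAt_id (a j)).sub_const (a j)).const_mul (L i j)).const_add
        (L.mulVec a i)
      simpa using this
    have hexp : HasDerivAt (fun t : ℝ => Real.exp (-(L.mulVec a i + L i j * (t - a j))))
        (Real.exp (-(L.mulVec a i)) * (-(L i j))) (a j) := by
      have := hu.neg.exp
      simpa using this
    have := (((hasDerivAt_const (a j) ((P i : ℝ) * Real.log (d i))).fun_sub
        (hu.mul_const ((P i : ℝ)))).fun_sub (hexp.const_mul (d i))).sub_const
        (Real.log (Nat.factorial (P i)))
    exact this.congr_deriv (by ring)
  have hsum : HasDerivAt (fun t : ℝ => ∑ i, ((P i : ℝ) * Real.log (d i)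
      - (L.mulVec a i + L i j * (t - a j)) * (P i : ℝ)
      - d i * Real.exp (-(L.mulVec a i + L i j * (t - a j)))
      - Real.log (Nat.factorial (P i))))
      (∑ i, L i j * (d i * Real.exp (-(L.mulVec a i)) - (P i : ℝ))) (a j) :=
    HasDerivAt.fun_sum fun i _ => h1 i
  have hquad : HasDerivAt (fun t : ℝ => γ * (t^2 + ∑ k ∈ Finset.univ \ {j}, (a k)^2))
      (γ * (2 * a j)) (a j) := by
    have := (((hasDerivAt_pow 2 (a j)).add_const
      (∑ k ∈ Finset.univ \ {j}, (a k)^2)).const_mul γ)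
    simpa using this
  have := hsum.fun_sub hquad
  exact this.congr_deriv (by simp only [lidarGrad]; ring)

theorem stmt_18 {N M : ℕ} (hN : 0 < N) (hM : 0 < M)
    (L : Matrix (Fin N) (Fin M) ℝ) (d : Fin N → ℝ) (hd : ∀ i, 0 < d i)
    (P : Fin N → ℕ) (γ : ℝ) (hγ : 0 < γ)
    (a : Fin M → ℝ) (ha : ∀ j, 0 ≤ a j) :
    (∀ α : Fin M → ℝ, (∀ j, 0 ≤ α j) →
        lidarPenalized L d P γ α ≤ lidarPenalized L d P γ a) ↔
      ((∀ j, a j * (lidarGrad L d P a j - 2 * γ * a j) = 0) ∧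
       (∀ j, a j = 0 → lidarGrad L d P a j - 2 * γ * a j ≤ 0)) := by
  constructor
  · intro hmax
    -- per-coordinate analysis
    have key : ∀ j : Fin M, (a j * (lidarGrad L d P a j - 2 * γ * a j) = 0) ∧
        (a j = 0 → lidarGrad L d P a j - 2 * γ * a j ≤ 0) := by
      intro j
      set f : ℝ → ℝ := fun t => lidarPenalized L d P γ (Function.update a j t) with hf
      set g : ℝ := lidarGrad L d P a j - 2 * γ * a j with hg
      have hderiv : HasDerivAt f g (a j) := lidar_hasDerivAt L d P γ a j
      have hfa : f (a j) = lidarPenalized L d P γ a := by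
        simp [hf, Function.update_eq_self]
      have hle : ∀ t : ℝ, 0 ≤ t → f t ≤ f (a j) := by
        intro t ht
        rw [hfa]
        apply hmax
        intro k
        rcases eq_or_ne k j with rfl | hk
        · simpa using ht
        · simpa [Function.update_of_ne hk] using ha k
      rcases eq_or_lt_of_le (ha j) with h0 | hpos
      · -- a j = 0 : right derivative nonpositive
        have hg0 : g ≤ 0 := by
          have htend : Filter.Tendsto (slope f (a j)) (nhdsWithin (a j) {(a j)}ᶜ) (nhds g) :=
            hasDerivAt_iff_tendsto_slope.mp hderiv
          have htend' : Filter.Tendsto (slope f (a j)) (nhdsWithin (a j) (Set.Ioi (a j)))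
              (nhds g) :=
            htend.mono_left (nhdsWithin_mono _ fun x hx => ne_of_gt hx)
          refine le_of_tendsto htend' ?_
          filter_upwards [self_mem_nhdsWithin] with t ht
          have ht' : a j < t := ht
          have hft : f t ≤ f (a j) := hle t (by rw [← h0] at ht'; exact le_of_lt ht')
          rw [slope_def_field]
          exact div_nonpos_of_nonpos_of_nonneg (sub_nonpos.2 hft) (by linarith)
        exact ⟨by rw [← h0]; ring, fun _ => hg0⟩
      · -- a j > 0 : interior point, derivative zero
        have hloc : IsLocalMax f (a j) := by
          filter_upwards [eventually_gt_nhds hpos] with t ht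
          exact hle t (le_of_lt ht)
        have hg0 : g = 0 := hloc.hasDerivAt_eq_zero hderiv
        exact ⟨by rw [hg0]; ring, fun h0 => absurd h0 (ne_of_gt hpos)⟩
    exact ⟨fun j => (key j).1, fun j => (key j).2⟩
  · rintro ⟨hcs, hsign⟩ α hα
    have hlin := lidar_linearize L d hd P γ hγ a α
    have hsum : ∑ j, (lidarGrad L d P a j - 2 * γ * a j) * (α j - a j) ≤ 0 := by
      apply Finset.sum_nonpos
      intro j _
      have hterm : (lidarGrad L d P a j - 2 * γ * a j) * (α j - a j)
          = (lidarGrad L d P a j - 2 * γ * a j) * α j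
            - a j * (lidarGrad L d P a j - 2 * γ * a j) := by ring
      rw [hterm, hcs j, sub_zero]
      rcases eq_or_lt_of_le (ha j) with h0 | hpos
      · exact mul_nonpos_of_nonpos_of_nonneg (hsign j h0.symm) (hα j)
      · have : lidarGrad L d P a j - 2 * γ * a j = 0 := by
          have := hcs j
          rcases mul_eq_zero.mp this with h | h
          · exact absurd h (ne_of_gt hpos)
          · exact h
        rw [this, zero_mul]
    linarith
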